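/- In the pivot step of the shadow vertex method with active set Ω_t of size n whose rows {A_i}_{i∈Ω_t} are linearly independent, suppose A_k (k = Ω_t^κ) is removed, and every other constraint row A_i (i ∉ Ω_t) has nonnegative coefficient γ_{iκ} ≥ 0 in its expansion A_i = Σ_j γ_{ij} A_{Ω_t^j}, while the objective c has negative coefficient α_κ < 0 in its expansion c = Σ_j α_j A_{Ω_t^j}. Then c does not lie in the convex cone generated by {A_1ᵀ, …, A_{m+n}ᵀ}. -/

import Mathlib

open Matrix

/-- Infeasibility detection in the pivot step: if, in the expansion over the linearly
independent active rows `B j = A (σ j)`, every row outside the active set has a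
nonnegative `κ`-coefficient while the objective `c` has a negative `κ`-coefficient,
then `c` does not lie in the convex cone generated by all constraint rows. -/
theorem stmt_18 {m n : ℕ} (A : Fin (m + n) → (Fin n → ℝ))
    (σ : Fin n → Fin (m + n)) (hσ : Function.Injective σ)
    (B : Fin n → (Fin n → ℝ)) (hB : ∀ j, B j = A (σ j))
    (hBindep : LinearIndependent ℝ B)
    (γ : Fin (m + n) → Fin n → ℝ)
    (hγ : ∀ i, A i = ∑ j, γ i j • B j)
    (c : Fin n → ℝ) (α : Fin n → ℝ) (hc : c = ∑ j, α j • B j)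
    (κ : Fin n)
    (hnonneg : ∀ i, (∀ j, i ≠ σ j) → 0 ≤ γ i κ)
    (hneg : α κ < 0) :
    ¬ ∃ lam : Fin (m + n) → ℝ, (∀ i, 0 ≤ lam i) ∧ c = ∑ i, lam i • A i := by
  rintro ⟨lam, hlam, hce⟩
  haveI : Nonempty (Fin n) := ⟨κ⟩
  have hcard : Fintype.card (Fin n) = Module.finrank ℝ (Fin n → ℝ) := by simp
  let b : Module.Basis (Fin n) ℝ (Fin n → ℝ) :=
    basisOfLinearIndependentOfCardEqFinrank hBindep hcard
  have hb : ∀ j, b j = B j := fun j => by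
    simp [b, coe_basisOfLinearIndependentOfCardEqFinrank]
  -- coordinate extraction
  have hrepr : ∀ (f : Fin n → ℝ), b.repr (∑ j, f j • B j) κ = f κ := by
    intro f
    simp_rw [← hb]
    have : b.repr (∑ j, f j • b j) = ∑ j, f j • Finsupp.single j 1 := by
      simp [map_sum, Module.Basis.repr_self]
    rw [this, Finsupp.finset_sum_apply]
    simp [Finsupp.single_apply]
  -- every γ i κ is nonnegative
  have hγnonneg : ∀ i, 0 ≤ γ i κ := by
    intro i
    by_cases h : ∀ j, i ≠ σ j
    · exact hnonneg i h
    · push_neg at h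
      obtain ⟨j, hj⟩ := h
      have h1 : B j = ∑ j', γ i j' • B j' := by
        rw [hB j, ← hj]; exact hγ i
      have h2 : b.repr (B j) κ = γ i κ := by rw [h1]; exact hrepr (γ i)
      rw [← hb j, Module.Basis.repr_self] at h2
      rw [← h2]
      by_cases hjk : j = κ <;> simp [Finsupp.single_apply, hjk]
  -- two evaluations of b.repr c κ
  have e1 : b.repr c κ = α κ := by rw [hc]; exact hrepr α
  have e2 : b.repr c κ = ∑ i, lam i * γ i κ := by
    have hcc : c = ∑ j, (∑ i, lam i * γ i j) • B j := by
      rw [hce]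
      simp_rw [hγ, Finset.smul_sum, smul_smul]
      rw [Finset.sum_comm]
      simp [Finset.sum_smul]
    rw [hcc]; exact hrepr _
  have : 0 ≤ α κ := by
    rw [← e1, e2]
    exact Finset.sum_nonneg fun i _ => mul_nonneg (hlam i) (hγnonneg i)
  linarith
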